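/- Let N ≥ 4 be an integer, Δθ = 2π/N, and let indices i be taken modulo N. Let g_i > 0 be constants and let L : I → (ZMod N → ℝ) be differentiable on an interval I with L_i(t) > 0 for all i and t. Define ω_i(t) = 2·tan(Δθ/2)·g_i / L_i(t), and suppose L̇_i = 2·cot(Δθ)·ω_i - csc(Δθ)·(ω_{i+1} + ω_{i-1}). Then the total length satisfies d/dt ∑_{i=0}^{N-1} L_i(t) = - ∑_{i=0}^{N-1} 4·g_i·(cot Δθ - csc Δθ)² / L_i(t); in particular the total length of the polygon is strictly decreasing. -/

import Mathlib

open Real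

/-- The total length of the crystalline polygon satisfies
`d/dt ∑ᵢ Lᵢ = - ∑ᵢ 4 gᵢ (cot Δθ - csc Δθ)² / Lᵢ`; in particular it is
strictly decreasing. -/
theorem stmt4 (N : ℕ) [NeZero N] (hN : 4 ≤ N) (Δθ : ℝ) (hΔθ : Δθ = 2 * π / N)
    (g : ZMod N → ℝ) (hg : ∀ i, 0 < g i)
    (I : Set ℝ) (hI : Convex ℝ I)
    (L L' : ℝ → ZMod N → ℝ) (ω : ℝ → ZMod N → ℝ)
    (hω : ∀ t i, ω t i = 2 * Real.tan (Δθ / 2) * g i / L t i)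
    (hLpos : ∀ t ∈ I, ∀ i, 0 < L t i)
    (hL : ∀ t ∈ I, ∀ i, HasDerivAt (fun s => L s i) (L' t i) t)
    (hL' : ∀ t ∈ I, ∀ i, L' t i =
      2 * (Real.cos Δθ / Real.sin Δθ) * ω t i
        - (1 / Real.sin Δθ) * (ω t (i + 1) + ω t (i - 1))) :
    (∀ t ∈ I, HasDerivAt (fun s => ∑ i : ZMod N, L s i)
      (- ∑ i : ZMod N,
        4 * g i * (Real.cos Δθ / Real.sin Δθ - 1 / Real.sin Δθ) ^ 2 / L t i) t) ∧
    StrictAntiOn (fun t => ∑ i : ZMod N, L t i) I := by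
  have hπ := Real.pi_pos
  have hNpos : (0:ℝ) < N := by exact_mod_cast (NeZero.pos N)
  have hΔpos : 0 < Δθ := by rw [hΔθ]; positivity
  have hΔle : Δθ ≤ π / 2 := by
    rw [hΔθ, div_le_div_iff₀ hNpos two_pos]
    have : (4:ℝ) ≤ N := by exact_mod_cast hN
    nlinarith
  have hhalf_pos : 0 < Δθ / 2 := by linarith
  have hhalf_lt : Δθ / 2 < π / 2 := by linarith
  have hcos_half : 0 < Real.cos (Δθ / 2) :=
    Real.cos_pos_of_mem_Ioo ⟨by linarith, hhalf_lt⟩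
  have hsin_half : 0 < Real.sin (Δθ / 2) :=
    Real.sin_pos_of_pos_of_lt_pi hhalf_pos (by linarith)
  have hsin : 0 < Real.sin Δθ :=
    Real.sin_pos_of_pos_of_lt_pi hΔpos (by linarith)
  have htan_pos : 0 < Real.tan (Δθ / 2) := by
    rw [Real.tan_eq_sin_div_cos]; positivity
  set c : ℝ := Real.cos Δθ / Real.sin Δθ - 1 / Real.sin Δθ with hc
  have h1 : Real.sin Δθ = 2 * Real.sin (Δθ / 2) * Real.cos (Δθ / 2) := by
    have := Real.sin_two_mul (Δθ / 2)
    rw [show 2 * (Δθ / 2) = Δθ by ring] at this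
    linarith
  have h2 : Real.cos Δθ = 1 - 2 * Real.sin (Δθ / 2) ^ 2 := by
    have h := Real.cos_two_mul (Δθ / 2)
    rw [show 2 * (Δθ / 2) = Δθ by ring] at h
    have h' := Real.sin_sq_add_cos_sq (Δθ / 2)
    nlinarith
  have hcval : c = - Real.tan (Δθ / 2) := by
    rw [hc, Real.tan_eq_sin_div_cos, h1, h2]
    field_simp
    ring
  have hcneg : c < 0 := by rw [hcval]; linarith
  -- the derivative of the total length
  have key : ∀ t ∈ I, ∑ i : ZMod N, L' t i
      = - ∑ i : ZMod N, 4 * g i * c ^ 2 / L t i := by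
    intro t ht
    have hshift1 : ∑ i : ZMod N, ω t (i + 1) = ∑ i : ZMod N, ω t i :=
      Fintype.sum_equiv (Equiv.addRight 1) _ _ (fun i => rfl)
    have hshift2 : ∑ i : ZMod N, ω t (i - 1) = ∑ i : ZMod N, ω t i :=
      Fintype.sum_equiv (Equiv.subRight 1) _ _ (fun i => rfl)
    calc ∑ i : ZMod N, L' t i
        = ∑ i : ZMod N, (2 * (Real.cos Δθ / Real.sin Δθ) * ω t i
            - (1 / Real.sin Δθ) * (ω t (i + 1) + ω t (i - 1))) := by
          exact Finset.sum_congr rfl fun i _ => hL' t ht i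
      _ = 2 * (Real.cos Δθ / Real.sin Δθ) * ∑ i : ZMod N, ω t i
            - (1 / Real.sin Δθ) * ((∑ i : ZMod N, ω t (i + 1))
              + ∑ i : ZMod N, ω t (i - 1)) := by
          rw [Finset.sum_sub_distrib, ← Finset.mul_sum, ← Finset.mul_sum,
            Finset.sum_add_distrib]
      _ = 2 * c * ∑ i : ZMod N, ω t i := by
          rw [hshift1, hshift2, hc]; ring
      _ = ∑ i : ZMod N, 2 * c * ω t i := by rw [Finset.mul_sum]
      _ = ∑ i : ZMod N, -(4 * g i * c ^ 2 / L t i) := by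
          refine Finset.sum_congr rfl fun i _ => ?_
          rw [hω t i, show Real.tan (Δθ / 2) = -c from by rw [hcval]; ring]
          have hLi := (hLpos t ht i).ne'
          field_simp
          ring
      _ = - ∑ i : ZMod N, 4 * g i * c ^ 2 / L t i := by
          rw [Finset.sum_neg_distrib]
  have hderiv : ∀ t ∈ I, HasDerivAt (fun s => ∑ i : ZMod N, L s i)
      (- ∑ i : ZMod N, 4 * g i * c ^ 2 / L t i) t := by
    intro t ht
    have := HasDerivAt.fun_sum (fun i (_ : i ∈ Finset.univ) => hL t ht i)
    rw [key t ht] at this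
    exact this
  have hneg : ∀ t ∈ I, (- ∑ i : ZMod N, 4 * g i * c ^ 2 / L t i) < 0 := by
    intro t ht
    have : 0 < ∑ i : ZMod N, 4 * g i * c ^ 2 / L t i := by
      apply Finset.sum_pos
      · intro i _
        have := hg i
        have := hLpos t ht i
        have hc2 : 0 < c ^ 2 := pow_pos (by linarith [abs_pos.mpr hcneg.ne] : (0:ℝ) < -c) 2 |>.trans_eq (by ring)
        positivity
      · exact Finset.univ_nonempty
    linarith
  refine ⟨hderiv, ?_⟩
  apply strictAntiOn_of_hasDerivWithinAt_neg hI
    (f' := fun t => - ∑ i : ZMod N, 4 * g i * c ^ 2 / L t i)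
  · intro t ht
    exact (hderiv t ht).continuousAt.continuousWithinAt
  · intro t ht
    exact (hderiv t (interior_subset ht)).hasDerivWithinAt
  · intro t ht
    exact hneg t (interior_subset ht)
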